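/- arXiv:1612.08070 — 4 statements merged into one kernel-verified Lean document; each statement's English description precedes it below -/
import Mathlib

section
/- For all real p and β with 0 ≤ p ≤ 1 and 0 ≤ β ≤ 1, and every natural number j, setting m = ⌊(1−β)·j·p⌋, one has Σ_{i=0}^{m} C(j,i) p^i (1−p)^{j−i} ≤ exp(−β² j p / 2), where C(j,i) is the binomial coefficient. -/
lemma exp_neg_le_quadratic {x : ℝ} (hx : 0 ≤ x) :
    Real.exp (-x) ≤ 1 - x + x ^ 2 / 2 := by
  have key : ∀ y ∈ Set.Ici (0:ℝ), 0 ≤ 1 - y + y ^ 2 / 2 - Real.exp (-y) := by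
    have hmono : MonotoneOn (fun y : ℝ => 1 - y + y ^ 2 / 2 - Real.exp (-y)) (Set.Ici 0) := by
      apply monotoneOn_of_deriv_nonneg (convex_Ici 0)
      · fun_prop
      · fun_prop
      · intro y hy
        simp only [interior_Ici, Set.mem_Ioi] at hy
        have hd : HasDerivAt (fun y : ℝ => 1 - y + y ^ 2 / 2 - Real.exp (-y))
            (-1 + y + Real.exp (-y)) y := by
          have h1 : HasDerivAt (fun y : ℝ => Real.exp (-y)) (-Real.exp (-y)) y := by
            exact ((Real.hasDerivAt_exp (-y)).comp y (hasDerivAt_neg y)).congr_deriv (by ring)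
          have h2 : HasDerivAt (fun y : ℝ => 1 - y + y ^ 2 / 2) (-1 + y) y := by
            have := ((hasDerivAt_id y).const_sub 1).add
              (((hasDerivAt_id y).pow 2).div_const 2)
            exact this.congr_deriv (by simp)
          exact (h2.sub h1).congr_deriv (by ring)
        rw [hd.deriv]
        nlinarith [Real.add_one_le_exp (-y)]
    intro y hy
    have := hmono (Set.self_mem_Ici) hy (by simpa using hy)
    simpa using this
  linarith [key x hx]

/-- Chernoff-bound corollary.  For reals `0 ≤ p ≤ 1`, `0 ≤ β ≤ 1`
and a natural number `j`, with `m = ⌊(1−β)·j·p⌋`,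
`Σ_{i=0}^{m} C(j,i) p^i (1−p)^{j−i} ≤ exp(−β² j p / 2)`. -/
theorem chernoff_lower_tail (p β : ℝ) (hp0 : 0 ≤ p) (hp1 : p ≤ 1)
    (hβ0 : 0 ≤ β) (hβ1 : β ≤ 1) (j : ℕ) :
    ∑ i ∈ Finset.range (⌊(1 - β) * j * p⌋₊ + 1),
        (j.choose i : ℝ) * p ^ i * (1 - p) ^ (j - i)
      ≤ Real.exp (-(β ^ 2 * j * p) / 2) := by
  set m := ⌊(1 - β) * j * p⌋₊ with hm
  have hq0 : (0:ℝ) ≤ 1 - p := by linarith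
  have hβ1' : (0:ℝ) ≤ 1 - β := by linarith
  have hjn : (0:ℝ) ≤ (j:ℝ) := Nat.cast_nonneg j
  have hmle : (m : ℝ) ≤ (1 - β) * j * p := Nat.floor_le (by positivity)
  have hmj : m ≤ j := by
    have h1 : (1 - β) * j * p ≤ (j:ℝ) := by nlinarith [mul_nonneg (mul_nonneg hβ0 hjn) hp0, mul_le_mul_of_nonneg_left hp1 hjn]
    have : (m:ℝ) ≤ (j:ℝ) := le_trans hmle h1
    exact_mod_cast this
  set a : ℝ := p * Real.exp (-β) with ha
  have ha0 : 0 ≤ a := by positivity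
  -- Step 1: termwise bound
  have step1 : ∑ i ∈ Finset.range (m + 1),
        (j.choose i : ℝ) * p ^ i * (1 - p) ^ (j - i)
      ≤ ∑ i ∈ Finset.range (m + 1),
        Real.exp (β * m) * ((j.choose i : ℝ) * a ^ i * (1 - p) ^ (j - i)) := by
    apply Finset.sum_le_sum
    intro i hi
    have him : (i:ℝ) ≤ (m:ℝ) := by
      exact_mod_cast Nat.lt_succ_iff.mp (Finset.mem_range.mp hi)
    have h1 : (1:ℝ) ≤ Real.exp (β * m) * Real.exp (-β) ^ i := by
      rw [← Real.exp_nat_mul, ← Real.exp_add]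
      apply Real.one_le_exp
      nlinarith
    have hnn : (0:ℝ) ≤ (j.choose i : ℝ) * p ^ i * (1 - p) ^ (j - i) := by positivity
    calc (j.choose i : ℝ) * p ^ i * (1 - p) ^ (j - i)
        = 1 * ((j.choose i : ℝ) * p ^ i * (1 - p) ^ (j - i)) := by ring
      _ ≤ (Real.exp (β * m) * Real.exp (-β) ^ i) *
            ((j.choose i : ℝ) * p ^ i * (1 - p) ^ (j - i)) :=
          mul_le_mul_of_nonneg_right h1 hnn
      _ = Real.exp (β * m) * ((j.choose i : ℝ) * a ^ i * (1 - p) ^ (j - i)) := by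
          rw [ha, mul_pow]; ring
  -- Step 2: extend the sum
  have step2 : ∑ i ∈ Finset.range (m + 1),
        Real.exp (β * m) * ((j.choose i : ℝ) * a ^ i * (1 - p) ^ (j - i))
      ≤ ∑ i ∈ Finset.range (j + 1),
        Real.exp (β * m) * ((j.choose i : ℝ) * a ^ i * (1 - p) ^ (j - i)) := by
    apply Finset.sum_le_sum_of_subset_of_nonneg
    · exact Finset.range_subset_range.mpr (by omega)
    · intro i _ _; positivity
  -- Step 3: binomial theorem
  have step3 : ∑ i ∈ Finset.range (j + 1),
        Real.exp (β * m) * ((j.choose i : ℝ) * a ^ i * (1 - p) ^ (j - i))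
      = Real.exp (β * m) * (a + (1 - p)) ^ j := by
    rw [← Finset.mul_sum, add_pow]
    congr 1
    exact Finset.sum_congr rfl fun i _ => by ring
  -- Step 4: 1 + x ≤ exp x
  have step4 : (a + (1 - p)) ^ j ≤ Real.exp ((j:ℝ) * (p * (Real.exp (-β) - 1))) := by
    have hbase : a + (1 - p) ≤ Real.exp (p * (Real.exp (-β) - 1)) := by
      have := Real.add_one_le_exp (p * (Real.exp (-β) - 1))
      rw [ha]; linarith
    calc (a + (1 - p)) ^ j ≤ Real.exp (p * (Real.exp (-β) - 1)) ^ j :=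
          pow_le_pow_left₀ (by positivity) hbase j
      _ = Real.exp ((j:ℝ) * (p * (Real.exp (-β) - 1))) := by
          rw [← Real.exp_nat_mul]
  -- Step 5: combine exponents
  have step5 : Real.exp (β * m) * Real.exp ((j:ℝ) * (p * (Real.exp (-β) - 1)))
      ≤ Real.exp (-(β ^ 2 * j * p) / 2) := by
    rw [← Real.exp_add]
    apply Real.exp_le_exp.mpr
    have hE : Real.exp (-β) ≤ 1 - β + β ^ 2 / 2 := exp_neg_le_quadratic hβ0
    have hjp : (0:ℝ) ≤ (j:ℝ) * p := by positivity
    nlinarith [mul_le_mul_of_nonneg_left hmle hβ0, mul_le_mul_of_nonneg_left hE hjp]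
  calc ∑ i ∈ Finset.range (m + 1), (j.choose i : ℝ) * p ^ i * (1 - p) ^ (j - i)
      ≤ Real.exp (β * m) * (a + (1 - p)) ^ j := by
        rw [← step3]; exact le_trans step1 step2
    _ ≤ Real.exp (β * m) * Real.exp ((j:ℝ) * (p * (Real.exp (-β) - 1))) :=
        mul_le_mul_of_nonneg_left step4 (Real.exp_nonneg _)
    _ ≤ Real.exp (-(β ^ 2 * j * p) / 2) := step5
end

section
/- Let 0 ≤ ε̃ ≤ 1/2 and let j be a natural number. Then Σ_{i=0}^{⌊j/2⌋} C(j,i) (1−ε̃)^i ε̃^{j−i} ≤ exp( −(j/(2(1−ε̃))) · (1/2 − ε̃)² ), where C(j,i) is the binomial coefficient. (Equivalently: if each of j independent trials succeeds with probability 1−ε̃, the probability that at most ⌊j/2⌋ trials succeed is at most exp(−j(1/2−ε̃)²/(2(1−ε̃))), which bounds the error of majority-vote probability amplification.) -/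
/-- majority-vote amplification error.  For `0 ≤ ε̃ ≤ 1/2` and `j : ℕ`,
`Σ_{i=0}^{⌊j/2⌋} C(j,i) (1−ε̃)^i ε̃^{j−i} ≤ exp(−(j/(2(1−ε̃)))·(1/2 − ε̃)²)`. -/
theorem majority_vote_error (eps : ℝ) (h0 : 0 ≤ eps) (h1 : eps ≤ 1 / 2) (j : ℕ) :
    ∑ i ∈ Finset.range (j / 2 + 1),
        (j.choose i : ℝ) * (1 - eps) ^ i * eps ^ (j - i)
      ≤ Real.exp (-((j : ℝ) / (2 * (1 - eps))) * (1 / 2 - eps) ^ 2) := by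
  set p : ℝ := 1 - eps with hp_def
  have hp2 : (1:ℝ)/2 ≤ p := by simp [hp_def]; linarith
  have hp0 : 0 < p := by linarith
  have hexp_pos : 0 < Real.exp (-((j : ℝ) / (2 * p)) * (1 / 2 - eps) ^ 2) :=
    Real.exp_pos _
  rcases eq_or_lt_of_le h0 with he | he
  · -- eps = 0
    subst he
    rcases Nat.eq_zero_or_pos j with hj | hj
    · subst hj; simp
    · have : ∀ i ∈ Finset.range (j / 2 + 1),
          (j.choose i : ℝ) * (1 - 0) ^ i * (0:ℝ) ^ (j - i) = 0 := by
        intro i hi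
        simp only [Finset.mem_range] at hi
        have hij : i < j := lt_of_lt_of_le hi (by omega)
        have : j - i ≠ 0 := by omega
        simp [zero_pow this]
      rw [Finset.sum_congr rfl this]
      simp only [Finset.sum_const_zero]
      exact le_of_lt (Real.exp_pos _)
  · -- eps > 0
    set m : ℕ := j / 2 with hm_def
    set δ : ℝ := 1/2 - eps with hδ_def
    have hδ0 : 0 ≤ δ := by simp [hδ_def]; linarith
    have hδh : δ ≤ 1/2 := by simp [hδ_def]; linarith
    set c : ℝ := Real.exp (-(δ^2/(2*p))) with hc_def
    have hc0 : 0 < c := Real.exp_pos _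
    have hepsp : eps / p ≤ 1 := by
      rw [div_le_one hp0]; linarith
    have hepsp0 : 0 ≤ eps / p := div_nonneg h0 hp0.le
    -- Step 1: sum * (eps/p)^m ≤ (2*eps)^j
    have step1 : (∑ i ∈ Finset.range (m + 1),
        (j.choose i : ℝ) * p ^ i * eps ^ (j - i)) * (eps/p)^m ≤ (2*eps)^j := by
      rw [Finset.sum_mul]
      have hterm : ∀ i ∈ Finset.range (m + 1),
          (j.choose i : ℝ) * p ^ i * eps ^ (j - i) * (eps/p)^m
            ≤ (j.choose i : ℝ) * eps ^ j := by
        intro i hi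
        simp only [Finset.mem_range] at hi
        have hi' : i ≤ m := by omega
        have hij : i ≤ j := le_trans hi' (Nat.div_le_self j 2)
        have h1' : (eps/p)^m ≤ (eps/p)^i :=
          pow_le_pow_of_le_one hepsp0 hepsp hi'
        have h2' : (j.choose i : ℝ) * p ^ i * eps ^ (j - i) * (eps/p)^i
            = (j.choose i : ℝ) * eps ^ j := by
          have : p ^ i * (eps/p)^i = eps ^ i := by
            rw [← mul_pow]; rw [mul_div_cancel₀ _ hp0.ne']
          calc (j.choose i : ℝ) * p ^ i * eps ^ (j - i) * (eps/p)^i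
              = (j.choose i : ℝ) * (p ^ i * (eps/p)^i) * eps ^ (j - i) := by ring
            _ = (j.choose i : ℝ) * eps ^ i * eps ^ (j - i) := by rw [this]
            _ = (j.choose i : ℝ) * eps ^ (i + (j - i)) := by rw [pow_add]; ring
            _ = (j.choose i : ℝ) * eps ^ j := by rw [Nat.add_sub_cancel' hij]
        calc (j.choose i : ℝ) * p ^ i * eps ^ (j - i) * (eps/p)^m
            ≤ (j.choose i : ℝ) * p ^ i * eps ^ (j - i) * (eps/p)^i := by
              apply mul_le_mul_of_nonneg_left h1'
              positivity
          _ = (j.choose i : ℝ) * eps ^ j := h2'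
      calc ∑ i ∈ Finset.range (m + 1),
            (j.choose i : ℝ) * p ^ i * eps ^ (j - i) * (eps/p)^m
          ≤ ∑ i ∈ Finset.range (m + 1), (j.choose i : ℝ) * eps ^ j :=
            Finset.sum_le_sum hterm
        _ ≤ ∑ i ∈ Finset.range (j + 1), (j.choose i : ℝ) * eps ^ j := by
            apply Finset.sum_le_sum_of_subset_of_nonneg
            · exact Finset.range_subset_range.mpr (by omega)
            · intro i _ _; positivity
        _ = (2*eps)^j := by
            rw [← Finset.sum_mul, mul_pow]
            congr 1
            rw [← Nat.cast_sum, Nat.sum_range_choose]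
            push_cast; ring
    -- Step 2: sum ≤ (2*eps)^(j-2*m) * (4*eps*p)^m
    have h2m : 2 * m ≤ j := by omega
    set k : ℕ := j - 2*m with hk_def
    have hjk : j = k + 2*m := by omega
    have step2 : (∑ i ∈ Finset.range (m + 1),
        (j.choose i : ℝ) * p ^ i * eps ^ (j - i))
          ≤ (2*eps)^k * (4*eps*p)^m := by
      have hpow_pos : 0 < (eps/p)^m := by positivity
      rw [← le_div_iff₀ hpow_pos] at step1
      refine le_trans step1 (le_of_eq ?_)
      rw [eq_comm, eq_div_iff hpow_pos.ne']
      have hmm : (4*eps*p) * (eps/p) = (2*eps)^2 := by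
        field_simp; ring
      calc (2*eps)^k * (4*eps*p)^m * (eps/p)^m
          = (2*eps)^k * ((4*eps*p) * (eps/p))^m := by rw [mul_assoc, ← mul_pow]
        _ = (2*eps)^k * ((2*eps)^2)^m := by rw [hmm]
        _ = (2*eps)^(k + 2*m) := by rw [← pow_mul, ← pow_add]
        _ = (2*eps)^j := by rw [← hjk]
    clear_value p δ c m k
    -- Step 3: scalar inequalities
    have hkey1 : 2*eps ≤ c := by
      have h1x : (-(δ^2/(2*p))) + 1 ≤ c := by
        rw [hc_def]; exact Real.add_one_le_exp _
      have hdd : δ^2/(2*p) ≤ 2*δ := by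
        rw [div_le_iff₀ (by linarith)]
        have hδp : 0 ≤ δ * p := mul_nonneg hδ0 hp0.le
        have h' : δ^2 ≤ δ * p := by
          nlinarith [mul_le_mul_of_nonneg_left hδh hδ0,
            mul_le_mul_of_nonneg_left hp2 hδ0]
        nlinarith
      have h2e : 2*eps = 1 - 2*δ := by rw [hδ_def]; ring
      linarith
    have hkey2 : 4*eps*p ≤ c^2 := by
      have hc2 : c^2 = Real.exp (-(δ^2/p)) := by
        rw [hc_def, ← Real.exp_nat_mul]
        congr 1
        push_cast
        field_simp
      have h1x : (-(δ^2/p)) + 1 ≤ Real.exp (-(δ^2/p)) := Real.add_one_le_exp _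
      have hd : δ^2/p ≤ 4*δ^2 := by
        rw [div_le_iff₀ hp0]
        nlinarith [sq_nonneg δ, mul_le_mul_of_nonneg_left hp2 (sq_nonneg δ)]
      have h4 : 4*eps*p = 1 - 4*δ^2 := by rw [hδ_def, hp_def]; ring
      rw [hc2]
      linarith
    -- Step 4: combine
    have h2e0 : (0:ℝ) ≤ 2*eps := by linarith
    have h4e0 : (0:ℝ) ≤ 4*eps*p := by positivity
    have step4 : (2*eps)^k * (4*eps*p)^m ≤ c^k * (c^2)^m := by
      apply mul_le_mul (pow_le_pow_left₀ h2e0 hkey1 k)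
        (pow_le_pow_left₀ h4e0 hkey2 m) (by positivity) (by positivity)
    have hcj : c^k * (c^2)^m = Real.exp (-((j : ℝ) / (2 * p)) * δ ^ 2) := by
      rw [← pow_mul, ← pow_add, ← hjk, hc_def, ← Real.exp_nat_mul]
      congr 1
      ring
    calc ∑ i ∈ Finset.range (m + 1),
          (j.choose i : ℝ) * p ^ i * eps ^ (j - i)
        ≤ (2*eps)^k * (4*eps*p)^m := step2
      _ ≤ c^k * (c^2)^m := step4
      _ = Real.exp (-((j : ℝ) / (2 * p)) * δ ^ 2) := hcj
end

section
/- Let H be a finite-dimensional complex inner product space, let P̄_0,…,P̄_n be a CSOP on H, let U_0,…,U_t be unitary operators on H, let Ψ ∈ H, and let Q be an orthogonal projection on H. Define π : {0,1}^n → ℝ by π(x) = ‖ Q · Σ_{k ∈ {0,…,n}^{t+1}} (−1)^{s_x(k)} Ψ(k) ‖², where s_x(k) = Σ_{i=0}^t x_{k_i} and x_0 := 0. Then the Fourier 1-norm of π satisfies L(π) ≤ Σ_{k,h ∈ {0,…,n}^{t+1}} |⟨Ψ(k), Q Ψ(h)⟩|. -/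
noncomputable section

/-- `Utilde U j = U j ∘ U (j-1) ∘ ⋯ ∘ U 0`. -/
def Utilde {H : Type*} [NormedAddCommGroup H] [InnerProductSpace ℂ H]
    (U : ℕ → H →L[ℂ] H) : ℕ → H →L[ℂ] H
  | 0 => U 0
  | j + 1 => U (j + 1) ∘L Utilde U j

/-- `Ptilde U P i j = (Utilde U j)† ∘ P i ∘ Utilde U j`. -/
def Ptilde {H : Type*} [NormedAddCommGroup H] [InnerProductSpace ℂ H]
    [FiniteDimensional ℂ H] (U P : ℕ → H →L[ℂ] H) (i j : ℕ) : H →L[ℂ] H :=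
  ContinuousLinearMap.adjoint (Utilde U j) ∘L (P i ∘L Utilde U j)

/-- `PsiVec U P Ψ k t = Ψ(k) = P̃_{k t}^t ⋯ P̃_{k 1}^1 P̃_{k 0}^0 Ψ`. -/
def PsiVec {H : Type*} [NormedAddCommGroup H] [InnerProductSpace ℂ H]
    [FiniteDimensional ℂ H] (U P : ℕ → H →L[ℂ] H) (Ψ : H) (k : ℕ → ℕ) : ℕ → H
  | 0 => Ptilde U P (k 0) 0 Ψ
  | j + 1 => Ptilde U P (k (j + 1)) (j + 1) (PsiVec U P Ψ k j)

/-- Extension of `x ∈ {0,1}^n` (bits `x_1, …, x_n`) to indices `0, …, n` with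
the convention `x_0 := 0`. -/
def extend0 {n : ℕ} (x : Fin n → Bool) : ℕ → Bool :=
  fun m => if h : 1 ≤ m ∧ m ≤ n then x ⟨m - 1, by omega⟩ else false

/-- `sx x k = Σ_{i=0}^t x_{k_i}` (with `x_0 := 0`). -/
def sx {n t : ℕ} (x : Fin n → Bool) (k : Fin (t + 1) → Fin (n + 1)) : ℕ :=
  ∑ i, if extend0 x (k i) then 1 else 0


/-- The character `χ_b(x) = (−1)^{b·x}` on the Boolean cube, where
`b·x = Σ_i b_i x_i`. -/
def chi {n : ℕ} (b x : Fin n → Bool) : ℝ :=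
  (-1 : ℝ) ^ (∑ i, if b i && x i then 1 else 0 : ℕ)

/-- The Fourier coefficient `α_b = 2^{−n} Σ_x f(x) χ_b(x)` of `f : {0,1}^n → ℝ`. -/
def boolFourierCoeff {n : ℕ} (f : (Fin n → Bool) → ℝ) (b : Fin n → Bool) : ℝ :=
  (2 ^ n : ℝ)⁻¹ * ∑ x, f x * chi b x

/-- The Fourier 1-norm `L(f) = Σ_b |α_b|`. -/
def fourierL1 {n : ℕ} (f : (Fin n → Bool) → ℝ) : ℝ :=
  ∑ b, |boolFourierCoeff f b|

lemma chi_eq_prod {n : ℕ} (b x : Fin n → Bool) :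
    chi b x = ∏ i, (-1 : ℝ) ^ (if b i && x i then 1 else 0 : ℕ) := by
  rw [chi, Finset.prod_pow_eq_pow_sum]

lemma chi_mul_chi {n : ℕ} (b c x : Fin n → Bool) :
    chi b x * chi c x = chi (fun i => xor (b i) (c i)) x := by
  rw [chi_eq_prod, chi_eq_prod, chi_eq_prod, ← Finset.prod_mul_distrib]
  refine Finset.prod_congr rfl fun i _ => ?_
  cases hb : b i <;> cases hc : c i <;> cases hx : x i <;> norm_num

lemma sum_chi_eq_zero {n : ℕ} (c : Fin n → Bool) (i0 : Fin n) (hc : c i0 = true) :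
    ∑ x : Fin n → Bool, chi c x = 0 := by
  have key : ∀ x : Fin n → Bool, chi c (Function.update x i0 (!x i0)) = - chi c x := by
    intro x
    rw [chi_eq_prod, chi_eq_prod,
        ← Finset.mul_prod_erase _ _ (Finset.mem_univ i0),
        ← Finset.mul_prod_erase _ _ (Finset.mem_univ i0)]
    have h1 : ∀ i ∈ Finset.univ.erase i0,
        (-1:ℝ) ^ (if c i && (Function.update x i0 (!x i0)) i then 1 else 0 : ℕ)
          = (-1:ℝ) ^ (if c i && x i then 1 else 0 : ℕ) := by
      intro i hi
      rw [Function.update_of_ne (Finset.ne_of_mem_erase hi)]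
    rw [Finset.prod_congr rfl h1, Function.update_self, hc]
    cases x i0 <;> simp <;> ring
  have hinv : Function.Involutive (fun x : Fin n → Bool => Function.update x i0 (!x i0)) := by
    intro x
    ext i
    by_cases h : i = i0 <;> simp [h, Function.update_of_ne]
  have h2 := Equiv.sum_comp (Function.Involutive.toPerm _ hinv) (chi c)
  rw [Function.Involutive.coe_toPerm] at h2
  simp only [key, Finset.sum_neg_distrib] at h2
  linarith

lemma sum_chi {n : ℕ} (c : Fin n → Bool) :
    ∑ x : Fin n → Bool, chi c x = if c = (fun _ => false) then (2^n : ℝ) else 0 := by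
  by_cases h : c = fun _ => false
  · subst h
    simp [chi, Finset.card_univ]
  · rw [if_neg h]
    have : ∃ i0, c i0 = true := by
      by_contra hh
      push_neg at hh
      exact h (funext fun i => by simpa using hh i)
    obtain ⟨i0, hi0⟩ := this
    exact sum_chi_eq_zero c i0 hi0

lemma sum_chi_mul {n : ℕ} (c b : Fin n → Bool) :
    ∑ x : Fin n → Bool, chi c x * chi b x = if c = b then (2^n : ℝ) else 0 := by
  simp only [chi_mul_chi]
  rw [sum_chi]
  congr 1
  simp only [eq_iff_iff]
  constructor
  · intro hh
    funext i
    have := congrFun hh i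
    cases hc : c i <;> cases hb : b i <;> simp [hc, hb] at this ⊢
  · intro hh; subst hh; funext i; cases c i <;> simp


def cnt {n t : ℕ} (k : Fin (t + 1) → Fin (n + 1)) (i : Fin (n + 1)) : ℕ :=
  (Finset.univ.filter (fun j => k j = i)).card

lemma sx_eq {n t : ℕ} (x : Fin n → Bool) (k : Fin (t + 1) → Fin (n + 1)) :
    sx x k = ∑ i : Fin (n + 1), cnt k i * (if extend0 x (i : ℕ) then 1 else 0) := by
  rw [sx, ← Finset.sum_fiberwise Finset.univ k (fun j => if extend0 x ((k j : ℕ)) then 1 else 0)]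
  refine Finset.sum_congr rfl fun i _ => ?_
  rw [Finset.sum_congr rfl (fun j hj => ?_), Finset.sum_const, cnt, smul_eq_mul]
  have : k j = i := (Finset.mem_filter.mp hj).2
  rw [this]

def Bkh {n t : ℕ} (k h : Fin (t + 1) → Fin (n + 1)) (i : Fin n) : Bool :=
  decide (Odd (cnt k i.succ + cnt h i.succ))

lemma sign_eq_chi {n t : ℕ} (x : Fin n → Bool) (k h : Fin (t + 1) → Fin (n + 1)) :
    ((-1 : ℝ) ^ (sx x k + sx x h)) = chi (Bkh k h) x := by
  rw [sx_eq, sx_eq, ← Finset.sum_add_distrib]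
  have hsum : ∀ i : Fin (n + 1),
      cnt k i * (if extend0 x (i : ℕ) then 1 else 0)
        + cnt h i * (if extend0 x (i : ℕ) then 1 else 0)
      = (cnt k i + cnt h i) * (if extend0 x (i : ℕ) then 1 else 0) := fun i => (add_mul _ _ _).symm
  rw [Finset.sum_congr rfl fun i _ => hsum i, ← Finset.prod_pow_eq_pow_sum, chi_eq_prod,
      Fin.prod_univ_succ]
  have h0 : extend0 x ((0 : Fin (n + 1)) : ℕ) = false := by
    simp [extend0]
  rw [h0]
  simp only [Bool.false_eq_true, if_false, mul_zero, pow_zero, one_mul]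
  refine Finset.prod_congr rfl fun i _ => ?_
  have hext : extend0 x ((i.succ : Fin (n + 1)) : ℕ) = x i := by
    have h1 : ((i.succ : Fin (n + 1)) : ℕ) = (i : ℕ) + 1 := rfl
    rw [h1, extend0]
    have hc : 1 ≤ (i : ℕ) + 1 ∧ (i : ℕ) + 1 ≤ n := ⟨Nat.le_add_left _ _, i.isLt⟩
    rw [dif_pos hc]
    congr 1
  rw [hext, Bkh]
  cases hx : x i
  · simp
  · simp only [if_true, mul_one, Bool.and_true]
    rcases Nat.even_or_odd (cnt k i.succ + cnt h i.succ) with he | ho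
    · rw [he.neg_one_pow]
      have : ¬ Odd (cnt k i.succ + cnt h i.succ) := by simpa [Nat.not_odd_iff_even] using he
      simp [this]
    · rw [ho.neg_one_pow]
      simp [ho]

lemma re_term (a b : ℕ) (z : ℂ) :
    ((-1 : ℂ) ^ b * ((starRingEnd ℂ) ((-1 : ℂ) ^ a) * z)).re = ((-1 : ℝ) ^ (a + b)) * z.re := by
  have hconj : (starRingEnd ℂ) ((-1 : ℂ) ^ a) = (-1 : ℂ) ^ a := by
    rw [map_pow, map_neg, map_one]
  rw [hconj, ← mul_assoc, ← pow_add, add_comm b a]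
  have : ((-1 : ℂ) ^ (a + b)) = (((-1 : ℝ) ^ (a + b) : ℝ) : ℂ) := by push_cast; ring
  rw [this, Complex.re_ofReal_mul]

lemma pi_expansion {H : Type*} [NormedAddCommGroup H] [InnerProductSpace ℂ H]
    [FiniteDimensional ℂ H] {n t : ℕ} (Φ : (Fin (t + 1) → Fin (n + 1)) → H)
    (Q : H →L[ℂ] H) (hQ_selfadj : IsSelfAdjoint Q) (hQ_idem : Q ∘L Q = Q)
    (x : Fin n → Bool) :
    ‖Q (∑ k : Fin (t + 1) → Fin (n + 1), ((-1 : ℂ) ^ sx x k) • Φ k)‖ ^ 2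
      = ∑ k : Fin (t + 1) → Fin (n + 1), ∑ h : Fin (t + 1) → Fin (n + 1),
          chi (Bkh k h) x * (inner ℂ (Φ k) (Q (Φ h)) : ℂ).re := by
  set v := ∑ k : Fin (t + 1) → Fin (n + 1), ((-1 : ℂ) ^ sx x k) • Φ k with hv
  have ha : ContinuousLinearMap.adjoint Q = Q :=
    ContinuousLinearMap.isSelfAdjoint_iff'.mp hQ_selfadj
  have h1 : ‖Q v‖ ^ 2 = (inner ℂ (Q v) (Q v) : ℂ).re := (inner_self_eq_norm_sq (𝕜 := ℂ) (Q v)).symm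
  have h2 : (inner ℂ (Q v) (Q v) : ℂ) = inner ℂ v (Q v) := by
    have h3 := ContinuousLinearMap.adjoint_inner_left Q (Q v) v
    rw [ha] at h3
    rw [h3]
    have : Q (Q v) = (Q ∘L Q) v := rfl
    rw [this, hQ_idem]
  rw [h1, h2, hv, map_sum, sum_inner]
  simp only [inner_sum, ContinuousLinearMap.map_smul, inner_smul_left, inner_smul_right,
    Complex.re_sum]
  refine Finset.sum_congr rfl fun k _ => Finset.sum_congr rfl fun h _ => ?_
  rw [re_term, sign_eq_chi]

lemma coeff_eq {n t : ℕ} (g : (Fin (t + 1) → Fin (n + 1)) → (Fin (t + 1) → Fin (n + 1)) → ℝ)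
    (b : Fin n → Bool) :
    boolFourierCoeff (fun x => ∑ k : Fin (t + 1) → Fin (n + 1),
        ∑ h : Fin (t + 1) → Fin (n + 1), chi (Bkh k h) x * g k h) b
      = ∑ k : Fin (t + 1) → Fin (n + 1), ∑ h : Fin (t + 1) → Fin (n + 1),
          g k h * (if Bkh k h = b then 1 else 0) := by
  rw [boolFourierCoeff]
  have h1 : ∀ x : Fin n → Bool,
      (∑ k : Fin (t + 1) → Fin (n + 1), ∑ h : Fin (t + 1) → Fin (n + 1),
          chi (Bkh k h) x * g k h) * chi b x
        = ∑ k : Fin (t + 1) → Fin (n + 1), ∑ h : Fin (t + 1) → Fin (n + 1),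
            (chi (Bkh k h) x * chi b x) * g k h := by
    intro x
    rw [Finset.sum_mul]
    refine Finset.sum_congr rfl fun k _ => ?_
    rw [Finset.sum_mul]
    refine Finset.sum_congr rfl fun h _ => ?_
    ring
  rw [Finset.sum_congr rfl fun x _ => h1 x, Finset.sum_comm]
  rw [Finset.sum_congr rfl fun k _ => Finset.sum_comm, Finset.mul_sum]
  refine Finset.sum_congr rfl fun k _ => ?_
  rw [Finset.mul_sum]
  refine Finset.sum_congr rfl fun h _ => ?_
  have h2 : ∑ x : Fin n → Bool, (chi (Bkh k h) x * chi b x) * g k h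
      = (∑ x : Fin n → Bool, chi (Bkh k h) x * chi b x) * g k h := by
    rw [Finset.sum_mul]
  rw [h2, sum_chi_mul]
  by_cases hb : Bkh k h = b
  · rw [if_pos hb, if_pos hb]
    have : (2 : ℝ) ^ n ≠ 0 := by positivity
    field_simp
  · rw [if_neg hb, if_neg hb]
    ring


theorem main {H : Type*} [NormedAddCommGroup H]
    [InnerProductSpace ℂ H] [FiniteDimensional ℂ H] (n t : ℕ)
    (Φ : (Fin (t + 1) → Fin (n + 1)) → H)
    (Q : H →L[ℂ] H) (hQ_selfadj : IsSelfAdjoint Q) (hQ_idem : Q ∘L Q = Q) :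
    fourierL1 (fun x : Fin n → Bool =>
        ‖Q (∑ k : Fin (t + 1) → Fin (n + 1), ((-1 : ℂ) ^ sx x k) • Φ k)‖ ^ 2) ≤
      ∑ k : Fin (t + 1) → Fin (n + 1), ∑ h : Fin (t + 1) → Fin (n + 1),
        ‖(inner ℂ (Φ k) (Q (Φ h)) : ℂ)‖ := by
  set g : (Fin (t + 1) → Fin (n + 1)) → (Fin (t + 1) → Fin (n + 1)) → ℝ :=
    fun k h => (inner ℂ (Φ k) (Q (Φ h)) : ℂ).re with hg
  have hπ : (fun x : Fin n → Bool =>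
      ‖Q (∑ k : Fin (t + 1) → Fin (n + 1), ((-1 : ℂ) ^ sx x k) • Φ k)‖ ^ 2)
      = fun x => ∑ k : Fin (t + 1) → Fin (n + 1), ∑ h : Fin (t + 1) → Fin (n + 1),
          chi (Bkh k h) x * g k h :=
    funext fun x => pi_expansion Φ Q hQ_selfadj hQ_idem x
  rw [fourierL1, hπ]
  have step1 : ∀ b : Fin n → Bool,
      |boolFourierCoeff (fun x => ∑ k : Fin (t + 1) → Fin (n + 1),
          ∑ h : Fin (t + 1) → Fin (n + 1), chi (Bkh k h) x * g k h) b|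
        ≤ ∑ k : Fin (t + 1) → Fin (n + 1), ∑ h : Fin (t + 1) → Fin (n + 1),
            |g k h| * (if Bkh k h = b then 1 else 0) := by
    intro b
    rw [coeff_eq]
    refine (Finset.abs_sum_le_sum_abs _ _).trans ?_
    refine Finset.sum_le_sum fun k _ => ?_
    refine (Finset.abs_sum_le_sum_abs _ _).trans ?_
    refine Finset.sum_le_sum fun h _ => ?_
    rw [abs_mul]
    gcongr
    split <;> simp
  refine (Finset.sum_le_sum fun b _ => step1 b).trans ?_
  rw [Finset.sum_comm]
  refine Finset.sum_le_sum fun k _ => ?_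
  rw [Finset.sum_comm]
  refine Finset.sum_le_sum fun h _ => ?_
  have h3 : ∑ b : Fin n → Bool, |g k h| * (if Bkh k h = b then 1 else 0)
      = |g k h| := by
    rw [← Finset.mul_sum, Finset.sum_ite_eq Finset.univ (Bkh k h) (fun _ => (1 : ℝ))]
    simp
  rw [h3, hg]
  exact (Complex.abs_re_le_norm _).trans (le_refl _)

/-- For a CSOP `P̄_0, …, P̄_n`, unitaries `U_0, …, U_t`, `Ψ ∈ H` and an
orthogonal projection `Q`, the output probability
`π(x) = ‖Q Σ_k (−1)^{s_x(k)} Ψ(k)‖²` satisfies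
`L(π) ≤ Σ_{k,h} |⟨Ψ(k), Q Ψ(h)⟩|`. -/
theorem fourierL1_le_inner_sum {H : Type*} [NormedAddCommGroup H]
    [InnerProductSpace ℂ H] [FiniteDimensional ℂ H] (n t : ℕ) (P U : ℕ → H →L[ℂ] H)
    (hP_selfadj : ∀ i ≤ n, IsSelfAdjoint (P i))
    (hP_idem : ∀ i ≤ n, P i ∘L P i = P i)
    (hP_orth : ∀ i ≤ n, ∀ j ≤ n, i ≠ j → P i ∘L P j = 0)
    (hP_sum : ∑ i ∈ Finset.range (n + 1), P i = 1)
    (hU_unitary : ∀ j ≤ t,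
      ContinuousLinearMap.adjoint (U j) ∘L U j = 1 ∧
        U j ∘L ContinuousLinearMap.adjoint (U j) = 1)
    (Ψ : H) (Q : H →L[ℂ] H) (hQ_selfadj : IsSelfAdjoint Q) (hQ_idem : Q ∘L Q = Q) :
    fourierL1 (fun x : Fin n → Bool =>
        ‖Q (∑ k : Fin (t + 1) → Fin (n + 1),
            ((-1 : ℂ) ^ sx x k) • PsiVec U P Ψ (fun i => (k (Fin.ofNat (t + 1) i) : ℕ)) t)‖ ^ 2) ≤
      ∑ k : Fin (t + 1) → Fin (n + 1), ∑ h : Fin (t + 1) → Fin (n + 1),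
        ‖(inner ℂ (PsiVec U P Ψ (fun i => (k (Fin.ofNat (t + 1) i) : ℕ)) t)
                (Q (PsiVec U P Ψ (fun i => (h (Fin.ofNat (t + 1) i) : ℕ)) t)) : ℂ)‖ :=
  main n t (fun k => PsiVec U P Ψ (fun i => (k (Fin.ofNat (t + 1) i) : ℕ)) t) Q hQ_selfadj hQ_idem
end
end

section
/- Let H be a finite-dimensional complex inner product space, let P̄_0,…,P̄_n be a CSOP on H, let U_0,…,U_t be unitary operators on H, let Ψ ∈ H with ‖Ψ‖ = 1, and let Q be an orthogonal projection on H. Define π : {0,1}^n → ℝ by π(x) = ‖ Q · Σ_{k ∈ {0,…,n}^{t+1}} (−1)^{s_x(k)} Ψ(k) ‖², where s_x(k) = Σ_{i=0}^t x_{k_i} and x_0 := 0, and let d = #{ k ∈ {0,…,n}^{t+1} : Ψ(k) ≠ 0 }. Then the Fourier 1-norm of π satisfies L(π) ≤ d. -/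
noncomputable section

/-! ### Auxiliary lemmas -/

section AuxProj

open ContinuousLinearMap

variable {H : Type*} [NormedAddCommGroup H] [InnerProductSpace ℂ H] [FiniteDimensional ℂ H]

lemma aux_comp_eq_one_apply {A B : H →L[ℂ] H} (h : A ∘L B = 1) (v : H) : A (B v) = v := by
  simpa using congrFun (congrArg DFunLike.coe h) v

lemma aux_proj_inner_self (Q : H →L[ℂ] H) (hQ : IsSelfAdjoint Q) (hQi : Q ∘L Q = Q) (v : H) :
    inner ℂ (Q v) (Q v) = inner ℂ v (Q v) := by
  have h := adjoint_inner_left Q (Q v) v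
  rw [hQ.adjoint_eq] at h
  rw [h]
  congr 1
  simpa using congrFun (congrArg DFunLike.coe hQi) v

lemma aux_proj_normsq (Q : H →L[ℂ] H) (hQ : IsSelfAdjoint Q) (hQi : Q ∘L Q = Q) (v : H) :
    ‖Q v‖ ^ 2 = RCLike.re (inner (𝕜 := ℂ) v (Q v)) := by
  rw [← inner_self_eq_norm_sq (𝕜 := ℂ), aux_proj_inner_self Q hQ hQi v]

lemma aux_proj_norm_le (Q : H →L[ℂ] H) (hQ : IsSelfAdjoint Q) (hQi : Q ∘L Q = Q) (v : H) :
    ‖Q v‖ ≤ ‖v‖ := by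
  rcases eq_or_lt_of_le (norm_nonneg (Q v)) with h | h
  · rw [← h]; exact norm_nonneg v
  · have h1 := aux_proj_normsq Q hQ hQi v
    have h2 : RCLike.re (inner (𝕜 := ℂ) v (Q v)) ≤ ‖v‖ * ‖Q v‖ := by
      calc RCLike.re (inner (𝕜 := ℂ) v (Q v)) ≤ ‖inner ℂ v (Q v)‖ := by
            exact (le_abs_self _).trans (Complex.abs_re_le_norm _)
        _ ≤ ‖v‖ * ‖Q v‖ := norm_inner_le_norm v (Q v)
    nlinarith [h, h1, h2]

lemma aux_csop_sum_normsq (n : ℕ) (R : ℕ → H →L[ℂ] H)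
    (hsa : ∀ i ≤ n, IsSelfAdjoint (R i)) (hid : ∀ i ≤ n, R i ∘L R i = R i)
    (hsum : ∑ i ∈ Finset.range (n + 1), R i = 1) (v : H) :
    ∑ i ∈ Finset.range (n + 1), ‖R i v‖ ^ 2 = ‖v‖ ^ 2 := by
  have h1 : ∀ i ∈ Finset.range (n + 1), ‖R i v‖ ^ 2
      = RCLike.re (inner (𝕜 := ℂ) v (R i v)) := by
    intro i hi
    rw [Finset.mem_range] at hi
    exact aux_proj_normsq (R i) (hsa i (by omega)) (hid i (by omega)) v
  rw [Finset.sum_congr rfl h1, ← map_sum, ← inner_sum]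
  have h2 : ∑ i ∈ Finset.range (n + 1), R i v = v := by
    rw [← ContinuousLinearMap.sum_apply, hsum, ContinuousLinearMap.one_apply]
  rw [h2, inner_self_eq_norm_sq]

lemma aux_Utilde_unitary (t : ℕ) (U : ℕ → H →L[ℂ] H)
    (hU : ∀ j ≤ t, adjoint (U j) ∘L U j = 1 ∧ U j ∘L adjoint (U j) = 1) :
    ∀ j ≤ t, adjoint (Utilde U j) ∘L Utilde U j = 1 ∧
      Utilde U j ∘L adjoint (Utilde U j) = 1 := by
  intro j
  induction j with
  | zero => intro h; exact hU 0 h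
  | succ j ih =>
    intro h
    obtain ⟨h1, h2⟩ := ih (by omega)
    obtain ⟨h3, h4⟩ := hU (j + 1) h
    constructor
    · ext v
      show adjoint (Utilde U (j+1)) (Utilde U (j+1) v) = v
      show adjoint (U (j+1) ∘L Utilde U j) ((U (j+1) ∘L Utilde U j) v) = v
      rw [adjoint_comp]
      simp only [comp_apply]
      rw [aux_comp_eq_one_apply h3, aux_comp_eq_one_apply h1]
    · ext v
      show Utilde U (j+1) (adjoint (Utilde U (j+1)) v) = v
      show (U (j+1) ∘L Utilde U j) (adjoint (U (j+1) ∘L Utilde U j) v) = v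
      rw [adjoint_comp]
      simp only [comp_apply]
      rw [aux_comp_eq_one_apply h2, aux_comp_eq_one_apply h4]

lemma aux_Ptilde_selfadjoint (n t : ℕ) (P U : ℕ → H →L[ℂ] H)
    (hP_selfadj : ∀ i ≤ n, IsSelfAdjoint (P i)) {i j : ℕ} (hi : i ≤ n) :
    IsSelfAdjoint (Ptilde U P i j) := by
  unfold Ptilde
  rw [IsSelfAdjoint, ContinuousLinearMap.star_eq_adjoint, adjoint_comp, adjoint_comp,
    adjoint_adjoint, (hP_selfadj i hi).adjoint_eq, comp_assoc]

lemma aux_Ptilde_idem (n t : ℕ) (P U : ℕ → H →L[ℂ] H)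
    (hP_idem : ∀ i ≤ n, P i ∘L P i = P i)
    (hU : ∀ j ≤ t, adjoint (U j) ∘L U j = 1 ∧ U j ∘L adjoint (U j) = 1)
    {i j : ℕ} (hi : i ≤ n) (hj : j ≤ t) :
    Ptilde U P i j ∘L Ptilde U P i j = Ptilde U P i j := by
  obtain ⟨-, h2⟩ := aux_Utilde_unitary t U hU j hj
  ext v
  simp only [Ptilde, comp_apply]
  rw [aux_comp_eq_one_apply h2]
  congr 1
  simpa using congrFun (congrArg DFunLike.coe (hP_idem i hi)) _

lemma aux_Ptilde_sum (n t : ℕ) (P U : ℕ → H →L[ℂ] H)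
    (hP_sum : ∑ i ∈ Finset.range (n + 1), P i = 1)
    (hU : ∀ j ≤ t, adjoint (U j) ∘L U j = 1 ∧ U j ∘L adjoint (U j) = 1)
    {j : ℕ} (hj : j ≤ t) :
    ∑ i ∈ Finset.range (n + 1), Ptilde U P i j = 1 := by
  obtain ⟨h1, -⟩ := aux_Utilde_unitary t U hU j hj
  ext v
  simp only [ContinuousLinearMap.sum_apply, Ptilde, comp_apply, one_apply]
  rw [← map_sum, ← ContinuousLinearMap.sum_apply, hP_sum, ContinuousLinearMap.one_apply]
  exact aux_comp_eq_one_apply h1 v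

lemma aux_PsiVec_congr (U P : ℕ → H →L[ℂ] H) (Ψ : H) (k k' : ℕ → ℕ) :
    ∀ s, (∀ i ≤ s, k i = k' i) → PsiVec U P Ψ k s = PsiVec U P Ψ k' s
  | 0, h => by simp only [PsiVec, h 0 le_rfl]
  | s + 1, h => by
    simp only [PsiVec]
    rw [h (s + 1) le_rfl, aux_PsiVec_congr U P Ψ k k' s (fun i hi => h i (by omega))]

lemma aux_psivec_sum (n t : ℕ) (P U : ℕ → H →L[ℂ] H)
    (hP_selfadj : ∀ i ≤ n, IsSelfAdjoint (P i))
    (hP_idem : ∀ i ≤ n, P i ∘L P i = P i)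
    (hP_sum : ∑ i ∈ Finset.range (n + 1), P i = 1)
    (hU : ∀ j ≤ t, adjoint (U j) ∘L U j = 1 ∧ U j ∘L adjoint (U j) = 1)
    (Ψ : H) :
    ∀ s, s ≤ t → ∑ k : Fin (s + 1) → Fin (n + 1),
      ‖PsiVec U P Ψ (fun i => (k (Fin.ofNat (s + 1) i) : ℕ)) s‖ ^ 2 = ‖Ψ‖ ^ 2 := by
  have hcsop : ∀ j ≤ t, ∀ v : H,
      ∑ i ∈ Finset.range (n + 1), ‖Ptilde U P i j v‖ ^ 2 = ‖v‖ ^ 2 := by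
    intro j hj v
    exact aux_csop_sum_normsq n (fun i => Ptilde U P i j)
      (fun i hi => aux_Ptilde_selfadjoint n t P U hP_selfadj hi)
      (fun i hi => aux_Ptilde_idem n t P U hP_idem hU hi hj)
      (aux_Ptilde_sum n t P U hP_sum hU hj) v
  intro s
  induction s with
  | zero =>
    intro hs
    have h0 : ∀ k : Fin 1 → Fin (n + 1),
        ‖PsiVec U P Ψ (fun i => (k (Fin.ofNat (0 + 1) i) : ℕ)) 0‖ ^ 2 = ‖Ptilde U P (k 0 : ℕ) 0 Ψ‖ ^ 2 := by
      intro k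
      rfl
    rw [Finset.sum_congr rfl (fun k _ => h0 k)]
    rw [Fintype.sum_equiv (Equiv.funUnique (Fin 1) (Fin (n + 1)))
      (fun k => ‖Ptilde U P (k 0 : ℕ) 0 Ψ‖ ^ 2)
      (fun a => ‖Ptilde U P (a : ℕ) 0 Ψ‖ ^ 2) (fun k => rfl)]
    rw [Fin.sum_univ_eq_sum_range (fun m => ‖Ptilde U P m 0 Ψ‖ ^ 2) (n + 1)]
    exact hcsop 0 (by omega) Ψ
  | succ s ih =>
    intro hs
    have ihv := ih (by omega)
    set e := Fin.snocEquiv (fun _ : Fin (s + 2) => Fin (n + 1)) with he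
    have key : ∀ (a : Fin (n + 1)) (g : Fin (s + 1) → Fin (n + 1)),
        PsiVec U P Ψ (fun i => ((e (a, g)) (Fin.ofNat (s + 1 + 1) i) : ℕ)) (s + 1)
          = Ptilde U P (a : ℕ) (s + 1) (PsiVec U P Ψ (fun i => (g (Fin.ofNat (s + 1) i) : ℕ)) s) := by
      intro a g
      show Ptilde U P ((e (a, g)) (Fin.ofNat (s + 1 + 1) (s + 1)) : ℕ) (s + 1) _ = _
      have h1 : Fin.ofNat (s + 1 + 1) (s + 1) = Fin.last (s + 1) := by
        ext
        rw [Fin.val_ofNat, Fin.val_last]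
        exact Nat.mod_eq_of_lt (by omega)
      have h2 : (e (a, g)) (Fin.last (s + 1)) = a := by
        simp [he, Fin.snocEquiv]
      rw [h1, h2]
      congr 1
      apply aux_PsiVec_congr
      intro i hi
      have h3 : Fin.ofNat (s + 1 + 1) i = Fin.castSucc (Fin.ofNat (s + 1) i) := by
        ext
        simp only [Fin.coe_castSucc]
        rw [Fin.val_ofNat, Fin.val_ofNat, Nat.mod_eq_of_lt (by omega), Nat.mod_eq_of_lt (by omega)]
      show ((e (a, g)) (Fin.ofNat (s + 1 + 1) i) : ℕ) = _
      rw [h3]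
      show ((Fin.snoc g a : ∀ _ : Fin (s+2), Fin (n+1)) (Fin.castSucc _) : ℕ) = _
      rw [Fin.snoc_castSucc]
    rw [← Fintype.sum_equiv e
      (fun p => ‖Ptilde U P (p.1 : ℕ) (s + 1) (PsiVec U P Ψ (fun i => (p.2 (Fin.ofNat (s + 1) i) : ℕ)) s)‖ ^ 2)
      (fun k => ‖PsiVec U P Ψ (fun i => (k (Fin.ofNat (s + 1 + 1) i) : ℕ)) (s + 1)‖ ^ 2)
      (fun p => by rw [← key p.1 p.2])]
    rw [Fintype.sum_prod_type]
    rw [Finset.sum_comm]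
    have hinner : ∀ g : Fin (s + 1) → Fin (n + 1),
        ∑ a : Fin (n + 1), ‖Ptilde U P (a : ℕ) (s + 1) (PsiVec U P Ψ (fun i => (g (Fin.ofNat (s + 1) i) : ℕ)) s)‖ ^ 2
          = ‖PsiVec U P Ψ (fun i => (g (Fin.ofNat (s + 1) i) : ℕ)) s‖ ^ 2 := by
      intro g
      rw [Fin.sum_univ_eq_sum_range
        (fun m => ‖Ptilde U P m (s + 1) (PsiVec U P Ψ (fun i => (g (Fin.ofNat (s + 1) i) : ℕ)) s)‖ ^ 2) (n + 1)]
      exact hcsop (s + 1) hs _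
    rw [Finset.sum_congr rfl (fun g _ => hinner g)]
    exact ihv

end AuxProj

/-! ### Character lemmas -/

lemma aux_neg_one_pow_congr {a b : ℕ} (h : a % 2 = b % 2) : ((-1 : ℝ)) ^ a = (-1) ^ b := by
  rcases Nat.even_or_odd a with ha | ha
  · have hb : Even b := by
      rw [Nat.even_iff] at ha ⊢; omega
    rw [ha.neg_one_pow, hb.neg_one_pow]
  · have hb : Odd b := by
      rw [Nat.odd_iff] at ha ⊢; omega
    rw [ha.neg_one_pow, hb.neg_one_pow]

lemma aux_chi_prod {n : ℕ} (b x : Fin n → Bool) :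
    chi b x = ∏ i, (if b i && x i then (-1 : ℝ) else 1) := by
  rw [chi, ← Finset.prod_pow_eq_pow_sum]
  apply Finset.prod_congr rfl
  intro i _
  by_cases h : b i && x i <;> simp [h]

lemma aux_sum_chi {n : ℕ} (b : Fin n → Bool) :
    ∑ x : Fin n → Bool, chi b x = if b = fun _ => false then (2 ^ n : ℝ) else 0 := by
  have h1 : ∑ x : Fin n → Bool, chi b x
      = ∑ x ∈ Fintype.piFinset (fun _ : Fin n => (Finset.univ : Finset Bool)),
        ∏ i, (if b i && x i then (-1 : ℝ) else 1) := by
    rw [Fintype.piFinset_univ]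
    exact Finset.sum_congr rfl fun x _ => aux_chi_prod b x
  rw [h1, ← Finset.prod_univ_sum (fun _ => (Finset.univ : Finset Bool))
    (fun i c => if b i && c then (-1:ℝ) else 1)]
  have h2 : ∀ i : Fin n, ∑ c : Bool, (if b i && c then (-1 : ℝ) else 1)
      = if b i then 0 else 2 := by
    intro i
    by_cases h : b i <;> simp [h, Finset.sum_ite_eq]
  rw [Finset.prod_congr rfl fun i _ => h2 i]
  by_cases hb : b = fun _ => false
  · subst hb; simp
  · rw [if_neg hb]
    obtain ⟨i, hi⟩ : ∃ i, b i = true := by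
      by_contra h
      push_neg at h
      exact hb (funext fun i => by simpa using h i)
    exact Finset.prod_eq_zero (Finset.mem_univ i) (by simp [hi])

lemma aux_chi_mul {n : ℕ} (a b x : Fin n → Bool) :
    chi a x * chi b x = chi (fun i => xor (a i) (b i)) x := by
  rw [chi, chi, chi, ← pow_add]
  apply aux_neg_one_pow_congr
  rw [← Finset.sum_add_distrib, Finset.sum_nat_mod,
    Finset.sum_nat_mod (f := fun i => if xor (a i) (b i) && x i then 1 else 0)]
  congr 1
  apply Finset.sum_congr rfl
  intro i _
  cases ha : a i <;> cases hb : b i <;> cases hx : x i <;> simp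

lemma aux_chi_ortho {n : ℕ} (a b : Fin n → Bool) :
    (2 ^ n : ℝ)⁻¹ * ∑ x, chi a x * chi b x = if a = b then 1 else 0 := by
  have h1 : ∀ x, chi a x * chi b x = chi (fun i => xor (a i) (b i)) x :=
    fun x => aux_chi_mul a b x
  rw [Finset.sum_congr rfl fun x _ => h1 x, aux_sum_chi]
  have h2 : ((fun i => xor (a i) (b i)) = fun _ => false) ↔ a = b := by
    constructor
    · intro h
      funext i
      have := congrFun h i
      cases ha : a i <;> cases hb : b i <;> simp_all
    · intro h; subst h; simp
  by_cases h : a = b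
  · rw [if_pos (h2.2 h), if_pos h]
    rw [inv_mul_cancel₀ (by positivity)]
  · rw [if_neg (fun hh => h (h2.1 hh)), if_neg h, mul_zero]

/-! ### Sign bookkeeping -/

def auxCnt {n t : ℕ} (k l : Fin (t + 1) → Fin (n + 1)) (j : Fin (n + 1)) : ℕ :=
  (Finset.univ.filter (fun i => k i = j)).card + (Finset.univ.filter (fun i => l i = j)).card

def auxBvec {n t : ℕ} (k l : Fin (t + 1) → Fin (n + 1)) : Fin n → Bool :=
  fun j => decide (auxCnt k l j.succ % 2 = 1)

lemma aux_sx_fiber {n t : ℕ} (x : Fin n → Bool) (k : Fin (t + 1) → Fin (n + 1)) :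
    sx x k = ∑ j : Fin (n + 1),
      (Finset.univ.filter (fun i => k i = j)).card * (if extend0 x (j : ℕ) then 1 else 0) := by
  rw [sx, ← Finset.sum_fiberwise Finset.univ k (fun i => if extend0 x (k i : ℕ) then 1 else 0)]
  apply Finset.sum_congr rfl
  intro j _
  have hterm : ∀ i ∈ Finset.filter (fun i => k i = j) Finset.univ,
      (if extend0 x (k i : ℕ) then (1:ℕ) else 0) = (if extend0 x (j : ℕ) then 1 else 0) := by
    intro i hi
    rw [Finset.mem_filter] at hi
    rw [hi.2]
  rw [Finset.sum_congr rfl hterm, Finset.sum_const, smul_eq_mul]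

lemma aux_sign_eq_chi {n t : ℕ} (x : Fin n → Bool) (k l : Fin (t + 1) → Fin (n + 1)) :
    (-1 : ℝ) ^ (sx x k + sx x l) = chi (auxBvec k l) x := by
  rw [chi]
  apply aux_neg_one_pow_congr
  rw [aux_sx_fiber x k, aux_sx_fiber x l, ← Finset.sum_add_distrib]
  have h1 : ∀ j : Fin (n + 1),
      (Finset.univ.filter (fun i => k i = j)).card * (if extend0 x (j : ℕ) then 1 else 0)
        + (Finset.univ.filter (fun i => l i = j)).card * (if extend0 x (j : ℕ) then 1 else 0)
      = auxCnt k l j * (if extend0 x (j : ℕ) then 1 else 0) := by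
    intro j; rw [auxCnt, add_mul]
  rw [Finset.sum_congr rfl fun j _ => h1 j]
  rw [Fin.sum_univ_succ
    (f := fun j : Fin (n + 1) => auxCnt k l j * (if extend0 x (j : ℕ) then 1 else 0))]
  have h2 : (if extend0 x ((0 : Fin (n + 1)) : ℕ) then 1 else 0) = 0 := by
    simp [extend0]
  rw [h2, mul_zero, zero_add]
  rw [Finset.sum_nat_mod]
  conv_rhs => rw [Finset.sum_nat_mod]
  congr 1
  apply Finset.sum_congr rfl
  intro j _
  have h3 : extend0 x ((j.succ : Fin (n + 1)) : ℕ) = x j := by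
    rw [extend0, Fin.val_succ, dif_pos (by omega)]
    congr 1
  rw [h3, auxBvec]
  by_cases hx : x j = true
  · by_cases h : auxCnt k l j.succ % 2 = 1
    · simp [hx, h]
    · have hd : (decide (auxCnt k l j.succ % 2 = 1)) = false := by simp [h]
      simp [hx, hd]
      omega
  · have hx' : x j = false := by simpa using hx
    simp [hx']

/-! ### Fourier lemmas -/

section AuxFourier
variable {n : ℕ} {K : Type*} [Fintype K]

lemma aux_coeff_of_sum_chi (β : K → Fin n → Bool) (c : K → ℝ) (b : Fin n → Bool) :
    boolFourierCoeff (fun x => ∑ p : K, chi (β p) x * c p) b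
      = ∑ p : K, if β p = b then c p else 0 := by
  classical
  unfold boolFourierCoeff
  have h1 : ∀ x : Fin n → Bool, (∑ p : K, chi (β p) x * c p) * chi b x
      = ∑ p : K, c p * (chi (β p) x * chi b x) := by
    intro x
    rw [Finset.sum_mul]
    exact Finset.sum_congr rfl fun p _ => by ring
  rw [Finset.sum_congr rfl fun x _ => h1 x, Finset.sum_comm, Finset.mul_sum]
  apply Finset.sum_congr rfl
  intro p _
  rw [← Finset.mul_sum, ← mul_assoc, mul_comm ((2^n:ℝ)⁻¹) (c p), mul_assoc,
    aux_chi_ortho (β p) b]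
  split <;> simp

lemma aux_fourierL1_sum_chi_le (β : K → Fin n → Bool) (c : K → ℝ) :
    fourierL1 (fun x => ∑ p : K, chi (β p) x * c p) ≤ ∑ p : K, |c p| := by
  classical
  unfold fourierL1
  calc ∑ b, |boolFourierCoeff (fun x => ∑ p : K, chi (β p) x * c p) b|
      = ∑ b, |∑ p : K, if β p = b then c p else 0| :=
        Finset.sum_congr rfl fun b _ => by rw [aux_coeff_of_sum_chi]
    _ ≤ ∑ b, ∑ p : K, |if β p = b then c p else 0| :=
        Finset.sum_le_sum fun b _ => Finset.abs_sum_le_sum_abs _ _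
    _ = ∑ p : K, ∑ b, |if β p = b then c p else 0| := Finset.sum_comm
    _ = ∑ p : K, |c p| := by
        apply Finset.sum_congr rfl
        intro p _
        have habs : ∀ b, |if β p = b then c p else 0| = if β p = b then |c p| else 0 := by
          intro b; split <;> simp
        rw [Finset.sum_congr rfl fun b _ => habs b, Finset.sum_ite_eq]
        simp
end AuxFourier

lemma aux_norm_sum_smul_sq {H : Type*} [NormedAddCommGroup H] [InnerProductSpace ℂ H]
    {K : Type*} [Fintype K] (w : K → H) (m : K → ℕ) :
    ‖∑ k : K, ((-1 : ℂ) ^ m k) • w k‖ ^ 2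
      = ∑ p : K × K, ((-1 : ℝ) ^ (m p.1 + m p.2)) * (inner ℂ (w p.1) (w p.2)).re := by
  have h0 : ‖∑ k : K, ((-1 : ℂ) ^ m k) • w k‖ ^ 2
      = (inner ℂ (∑ k : K, ((-1 : ℂ) ^ m k) • w k) (∑ l : K, ((-1 : ℂ) ^ m l) • w l)).re := by
    rw [← inner_self_eq_norm_sq (𝕜 := ℂ)]
    rfl
  rw [h0, sum_inner]
  simp only [inner_smul_left, inner_sum, inner_smul_right]
  rw [Complex.re_sum]
  rw [Fintype.sum_prod_type]
  apply Finset.sum_congr rfl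
  intro k _
  rw [Complex.re_sum]
  apply Finset.sum_congr rfl
  intro l _
  have hc : ∀ q : ℕ, ((-1 : ℂ) ^ q) = (((-1 : ℝ) ^ q : ℝ) : ℂ) := by
    intro q; push_cast; ring
  rw [hc, hc, Complex.conj_ofReal]
  have h2 : ((((-1:ℝ) ^ m l : ℝ)) : ℂ) * (((((-1:ℝ) ^ m k : ℝ)) : ℂ) * (inner ℂ (w k) (w l)))
      = ((((-1:ℝ) ^ (m k + m l) : ℝ)) : ℂ) * (inner ℂ (w k) (w l)) := by
    rw [pow_add]; push_cast; ring
  rw [h2, Complex.re_ofReal_mul]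

/-- For a CSOP `P̄_0, …, P̄_n`, unitaries `U_0, …, U_t`, a unit vector
`Ψ ∈ H` and an orthogonal projection `Q`, the output probability
`π(x) = ‖Q Σ_k (−1)^{s_x(k)} Ψ(k)‖²` satisfies `L(π) ≤ d`, where
`d = #{k ∈ {0,…,n}^{t+1} : Ψ(k) ≠ 0}`. -/
theorem fourierL1_le_card_nonzero {H : Type*} [NormedAddCommGroup H]
    [InnerProductSpace ℂ H] [FiniteDimensional ℂ H] (n t : ℕ) (P U : ℕ → H →L[ℂ] H)
    (hP_selfadj : ∀ i ≤ n, IsSelfAdjoint (P i))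
    (hP_idem : ∀ i ≤ n, P i ∘L P i = P i)
    (hP_orth : ∀ i ≤ n, ∀ j ≤ n, i ≠ j → P i ∘L P j = 0)
    (hP_sum : ∑ i ∈ Finset.range (n + 1), P i = 1)
    (hU_unitary : ∀ j ≤ t,
      ContinuousLinearMap.adjoint (U j) ∘L U j = 1 ∧
        U j ∘L ContinuousLinearMap.adjoint (U j) = 1)
    (Ψ : H) (hΨ : ‖Ψ‖ = 1)
    (Q : H →L[ℂ] H) (hQ_selfadj : IsSelfAdjoint Q) (hQ_idem : Q ∘L Q = Q) :
    fourierL1 (fun x : Fin n → Bool =>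
        ‖Q (∑ k : Fin (t + 1) → Fin (n + 1),
            ((-1 : ℂ) ^ sx x k) • PsiVec U P Ψ (fun i => (k (Fin.ofNat (t + 1) i) : ℕ)) t)‖ ^ 2) ≤
      (Nat.card {k : Fin (t + 1) → Fin (n + 1) //
          PsiVec U P Ψ (fun i => (k (Fin.ofNat (t + 1) i) : ℕ)) t ≠ 0} : ℝ) := by
    classical
  set K := (Fin (t + 1) → Fin (n + 1)) with hK
  set w : K → H := fun k => Q (PsiVec U P Ψ (fun i => (k (Fin.ofNat (t + 1) i) : ℕ)) t) with hw
  have hfun : (fun x : Fin n → Bool =>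
        ‖Q (∑ k : K, ((-1 : ℂ) ^ sx x k) • PsiVec U P Ψ (fun i => (k (Fin.ofNat (t + 1) i) : ℕ)) t)‖ ^ 2)
      = fun x => ∑ p : K × K,
          chi (auxBvec p.1 p.2) x * (inner ℂ (w p.1) (w p.2)).re := by
    funext x
    rw [map_sum]
    simp only [map_smul]
    rw [aux_norm_sum_smul_sq w (fun k => sx x k)]
    exact Finset.sum_congr rfl fun p _ => by rw [aux_sign_eq_chi x p.1 p.2]
  rw [hfun]
  have step1 : fourierL1 (fun x => ∑ p : K × K,
        chi (auxBvec p.1 p.2) x * (inner ℂ (w p.1) (w p.2)).re)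
      ≤ ∑ p : K × K, |(inner ℂ (w p.1) (w p.2)).re| :=
    aux_fourierL1_sum_chi_le (fun p : K × K => auxBvec p.1 p.2)
      (fun p : K × K => (inner ℂ (w p.1) (w p.2)).re)
  have step2 : ∑ p : K × K, |(inner ℂ (w p.1) (w p.2)).re|
      ≤ ∑ p : K × K, ‖w p.1‖ * ‖w p.2‖ := by
    apply Finset.sum_le_sum
    intro p _
    calc |(inner ℂ (w p.1) (w p.2)).re| ≤ ‖(inner ℂ (w p.1) (w p.2))‖ :=
          Complex.abs_re_le_norm _
      _ = ‖(inner ℂ (w p.1) (w p.2))‖ := rfl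
      _ ≤ ‖w p.1‖ * ‖w p.2‖ := norm_inner_le_norm _ _
  have step3 : ∑ p : K × K, ‖w p.1‖ * ‖w p.2‖ = (∑ k : K, ‖w k‖) ^ 2 := by
    rw [sq, Finset.sum_mul_sum, Fintype.sum_prod_type]
  set S : Finset K := Finset.univ.filter (fun k => PsiVec U P Ψ (fun i => (k (Fin.ofNat (t + 1) i) : ℕ)) t ≠ 0)
    with hS
  have hwzero : ∀ k : K, PsiVec U P Ψ (fun i => (k (Fin.ofNat (t + 1) i) : ℕ)) t = 0 → w k = 0 := by
    intro k hk
    rw [hw]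
    simp only [hk, map_zero]
  have step4 : ∑ k : K, ‖w k‖ = ∑ k ∈ S, ‖w k‖ := by
    rw [hS]
    refine (Finset.sum_filter_of_ne ?_).symm
    intro k _ hk hk0
    exact hk (by rw [hwzero k hk0, norm_zero])
  have step5 : (∑ k ∈ S, ‖w k‖) ^ 2 ≤ (S.card : ℝ) * ∑ k ∈ S, ‖w k‖ ^ 2 :=
    sq_sum_le_card_mul_sum_sq
  have step6 : ∑ k ∈ S, ‖w k‖ ^ 2 ≤ 1 := by
    calc ∑ k ∈ S, ‖w k‖ ^ 2 ≤ ∑ k : K, ‖w k‖ ^ 2 := by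
          apply Finset.sum_le_sum_of_subset_of_nonneg (Finset.filter_subset _ _)
          intro k _ _
          positivity
      _ ≤ ∑ k : K, ‖PsiVec U P Ψ (fun i => (k (Fin.ofNat (t + 1) i) : ℕ)) t‖ ^ 2 := by
          apply Finset.sum_le_sum
          intro k _
          have := aux_proj_norm_le Q hQ_selfadj hQ_idem (PsiVec U P Ψ (fun i => (k (Fin.ofNat (t + 1) i) : ℕ)) t)
          exact pow_le_pow_left₀ (norm_nonneg _) this 2
      _ = ‖Ψ‖ ^ 2 :=
          aux_psivec_sum n t P U hP_selfadj hP_idem hP_sum hU_unitary Ψ t le_rfl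
      _ = 1 := by rw [hΨ]; norm_num
  have hcard : (Nat.card {k : K // PsiVec U P Ψ (fun i => (k (Fin.ofNat (t + 1) i) : ℕ)) t ≠ 0} : ℝ)
      = (S.card : ℝ) := by
    rw [Nat.card_eq_fintype_card, Fintype.card_subtype]
  rw [hcard]
  calc fourierL1 (fun x => ∑ p : K × K,
        chi (auxBvec p.1 p.2) x * (inner ℂ (w p.1) (w p.2)).re)
      ≤ ∑ p : K × K, ‖w p.1‖ * ‖w p.2‖ := step1.trans step2
    _ = (∑ k ∈ S, ‖w k‖) ^ 2 := by rw [step3, step4]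
    _ ≤ (S.card : ℝ) * ∑ k ∈ S, ‖w k‖ ^ 2 := step5
    _ ≤ (S.card : ℝ) * 1 := by
        apply mul_le_mul_of_nonneg_left step6 (by positivity)
    _ = (S.card : ℝ) := mul_one _
end
end
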